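/- (Rigorous core of Theorem 2: LT codes are not universal) The corner-point density evolution map G is continuous and nondecreasing on [0,1] with G(0) > 0 and G(1) ≤ 1, and the density evolution sequence defined by y_0 = 1 and y_{i+1} = G(y_i) is nonincreasing and converges to a fixed point L of G satisfying L ≥ ((1−p)·e^{−β(μ+1)})^{1/(1−β)} > 0. Hence the residual erasure probability of the LT ensemble designed for the extremal symmetric point is bounded away from zero at the corner point, uniformly in the truncation level N, so these LT codes cannot simultaneously achieve the extremal symmetric point and a corner point of the capacity region under iterative decoding. -/

import Mathlib

open Real Filter

noncomputable def qp (p x : ℝ) : ℝ :=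
  (Real.sqrt ((1 - p) ^ 2 + 4 * p * x) - (1 - p)) / (2 * p)

noncomputable def aCoeff (p : ℝ) (i : ℕ) : ℝ :=
  (∑ k ∈ Finset.range i, (Nat.choose (2 * i - 1) k : ℝ) * p ^ k) /
    (i * (1 + p) ^ (2 * i - 1))

noncomputable def Gpart (p : ℝ) (N : ℕ) : ℝ := ∑ i ∈ Finset.Icc 1 N, aCoeff p i

noncomputable def Sp (p x : ℝ) : ℝ := - Real.log (qp p (1 - x))

noncomputable def rhoN (p μ : ℝ) (N : ℕ) (x : ℝ) : ℝ :=
  (μ + (∑ i ∈ Finset.Icc 1 N, aCoeff p i * x ^ i) + x ^ N) / (μ + Gpart p N + 1)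

noncomputable def lamBarN (p μ : ℝ) (N : ℕ) (x : ℝ) : ℝ :=
  Real.exp (-(μ + Gpart p N + 1) * rhoN p μ N (1 - x))

noncomputable def deSym (p μ : ℝ) (N : ℕ) (x : ℝ) : ℝ :=
  ((1 - p) + p * lamBarN p μ N x) * lamBarN p μ N x

noncomputable def cornerMap (p μ : ℝ) (N : ℕ) (α ε₁ ε₂ : ℝ) (y : ℝ) : ℝ :=
  ((1 - p) + p * Real.exp (-(α * (1 - ε₁)))) *
    Real.exp (-(α * (1 - ε₂)) * rhoN p μ N (1 - y))

lemma aCoeff_nonneg {p : ℝ} (hp : 0 ≤ p) (i : ℕ) : 0 ≤ aCoeff p i := by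
  unfold aCoeff
  apply div_nonneg
  · exact Finset.sum_nonneg fun k _ => by positivity
  · positivity

lemma aCoeff_le {p : ℝ} (hp : 0 ≤ p) {i : ℕ} (hi : 1 ≤ i) : aCoeff p i ≤ 1 / i := by
  have hip : (0:ℝ) < i := by exact_mod_cast hi
  have hpos : (0:ℝ) < (1 + p) ^ (2 * i - 1) := by positivity
  have hnum : (∑ k ∈ Finset.range i, (Nat.choose (2 * i - 1) k : ℝ) * p ^ k)
      ≤ (1 + p) ^ (2 * i - 1) := by
    have hexp : (p + 1) ^ (2 * i - 1)
        = ∑ k ∈ Finset.range (2 * i - 1 + 1), p ^ k * 1 ^ (2 * i - 1 - k) *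
            (Nat.choose (2 * i - 1) k : ℝ) := add_pow p 1 (2 * i - 1)
    have h1 : (1 + p) ^ (2 * i - 1)
        = ∑ k ∈ Finset.range (2 * i - 1 + 1), (Nat.choose (2 * i - 1) k : ℝ) * p ^ k := by
      rw [add_comm, hexp]
      apply Finset.sum_congr rfl
      intro k _; ring
    rw [h1]
    apply Finset.sum_le_sum_of_subset_of_nonneg
    · apply Finset.range_subset_range.mpr
      omega
    · intro k _ _; positivity
  unfold aCoeff
  rw [div_le_div_iff₀ (by positivity) hip]
  calc (∑ k ∈ Finset.range i, (Nat.choose (2 * i - 1) k : ℝ) * p ^ k) * i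
      ≤ (1 + p) ^ (2 * i - 1) * i := by
        apply mul_le_mul_of_nonneg_right hnum hip.le
    _ = 1 * (i * (1 + p) ^ (2 * i - 1)) := by ring

set_option maxHeartbeats 1000000 in
theorem stmt15 (p : ℝ) (hp0 : 0 < p) (hp1 : p < 1) (μ : ℝ) (hμ : 0 < μ)
    (N : ℕ) (hN : 1 ≤ N)
    (ε ε₁ ε₂ : ℝ) (hε : ε ∈ Set.Ico (0 : ℝ) 1) (hε₁ : ε₁ ∈ Set.Ico (0 : ℝ) 1)
    (hε₂ : ε₂ ∈ Set.Ico (0 : ℝ) 1) (hεε₂ : ε < ε₂)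
    (α β : ℝ) (hα : α = (μ + Gpart p N + 1) / (1 - ε)) (hβ : β = (1 - ε₂) / (1 - ε))
    (hβ0 : 0 < β) (hβ1 : β < 1) :
    ContinuousOn (cornerMap p μ N α ε₁ ε₂) (Set.Icc 0 1) ∧
    MonotoneOn (cornerMap p μ N α ε₁ ε₂) (Set.Icc 0 1) ∧
    0 < cornerMap p μ N α ε₁ ε₂ 0 ∧
    cornerMap p μ N α ε₁ ε₂ 1 ≤ 1 ∧
    Antitone (fun n : ℕ => (cornerMap p μ N α ε₁ ε₂)^[n] 1) ∧
    ∃ L : ℝ,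
      Filter.Tendsto (fun n : ℕ => (cornerMap p μ N α ε₁ ε₂)^[n] 1)
        Filter.atTop (nhds L) ∧
      cornerMap p μ N α ε₁ ε₂ L = L ∧
      ((1 - p) * Real.exp (-(β * (μ + 1)))) ^ (1 / (1 - β)) ≤ L ∧
      0 < ((1 - p) * Real.exp (-(β * (μ + 1)))) ^ (1 / (1 - β)) := by
  obtain ⟨hε0, hεlt1⟩ := hε
  obtain ⟨hε₁0, hε₁1⟩ := hε₁
  obtain ⟨hε₂0, hε₂1⟩ := hε₂
  have hp1' : 0 < 1 - p := by linarith
  have ha_nonneg : ∀ i, 0 ≤ aCoeff p i := aCoeff_nonneg hp0.le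
  have hG_nonneg : 0 ≤ Gpart p N := Finset.sum_nonneg fun i _ => ha_nonneg i
  have hD : 0 < μ + Gpart p N + 1 := by linarith
  have hεpos : 0 < 1 - ε := by linarith
  have hε₂pos : 0 < 1 - ε₂ := by linarith
  have hαpos : 0 < α := by rw [hα]; positivity
  have hC0 : 0 < (1 - p) + p * Real.exp (-(α * (1 - ε₁))) := by positivity
  have hC1 : (1 - p) + p * Real.exp (-(α * (1 - ε₁))) ≤ 1 := by
    have h1 : Real.exp (-(α * (1 - ε₁))) ≤ 1 :=
      Real.exp_le_one_iff.mpr (by nlinarith)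
    nlinarith
  -- key rewriting of the exponent
  have hrho : ∀ x : ℝ, α * (1 - ε₂) * rhoN p μ N x
      = β * (μ + (∑ i ∈ Finset.Icc 1 N, aCoeff p i * x ^ i) + x ^ N) := by
    intro x
    rw [hα, hβ, rhoN]
    field_simp
  have hkey : ∀ y : ℝ, cornerMap p μ N α ε₁ ε₂ y
      = ((1 - p) + p * Real.exp (-(α * (1 - ε₁)))) *
        Real.exp (-(β * (μ + (∑ i ∈ Finset.Icc 1 N, aCoeff p i * (1 - y) ^ i)
          + (1 - y) ^ N))) := by
    intro y
    rw [cornerMap, neg_mul, hrho (1 - y)]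
  -- positivity
  have hGpos : ∀ y : ℝ, 0 < cornerMap p μ N α ε₁ ε₂ y := by
    intro y
    rw [hkey]
    positivity
  -- ≤ 1 on [0,1]
  have hGle1 : ∀ y : ℝ, y ∈ Set.Icc (0:ℝ) 1 → cornerMap p μ N α ε₁ ε₂ y ≤ 1 := by
    intro y hy
    obtain ⟨hy0, hy1⟩ := hy
    rw [hkey]
    have hx0 : (0:ℝ) ≤ 1 - y := by linarith
    have hS : 0 ≤ ∑ i ∈ Finset.Icc 1 N, aCoeff p i * (1 - y) ^ i :=
      Finset.sum_nonneg fun i _ => mul_nonneg (ha_nonneg i) (by positivity)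
    have hxN : 0 ≤ (1 - y) ^ N := by positivity
    have hexp : Real.exp (-(β * (μ + (∑ i ∈ Finset.Icc 1 N, aCoeff p i * (1 - y) ^ i)
        + (1 - y) ^ N))) ≤ 1 := Real.exp_le_one_iff.mpr (by nlinarith)
    calc ((1 - p) + p * Real.exp (-(α * (1 - ε₁)))) * Real.exp _
        ≤ 1 * 1 := mul_le_mul hC1 hexp (Real.exp_pos _).le (by linarith)
      _ = 1 := by ring
  -- continuity
  have hcont : Continuous (cornerMap p μ N α ε₁ ε₂) := by
    unfold cornerMap rhoN
    apply Continuous.mul continuous_const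
    apply Real.continuous_exp.comp
    apply Continuous.mul continuous_const
    apply Continuous.div_const
    apply Continuous.add
    · apply Continuous.add continuous_const
      apply continuous_finset_sum
      intro i _
      exact (continuous_const.mul ((continuous_const.sub continuous_id).pow i))
    · exact (continuous_const.sub continuous_id).pow N
  -- monotonicity
  have hmono : MonotoneOn (cornerMap p μ N α ε₁ ε₂) (Set.Icc 0 1) := by
    intro y1 hy1 y2 hy2 h12
    rw [hkey, hkey]
    apply mul_le_mul_of_nonneg_left _ hC0.le
    apply Real.exp_le_exp.mpr
    apply neg_le_neg
    apply mul_le_mul_of_nonneg_left _ hβ0.le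
    have hx0 : (0:ℝ) ≤ 1 - y2 := by linarith [hy2.2]
    have hxle : 1 - y2 ≤ 1 - y1 := by linarith
    have hS : (∑ i ∈ Finset.Icc 1 N, aCoeff p i * (1 - y2) ^ i)
        ≤ ∑ i ∈ Finset.Icc 1 N, aCoeff p i * (1 - y1) ^ i := by
      apply Finset.sum_le_sum
      intro i _
      exact mul_le_mul_of_nonneg_left (pow_le_pow_left₀ hx0 hxle i) (ha_nonneg i)
    have hP : (1 - y2) ^ N ≤ (1 - y1) ^ N := pow_le_pow_left₀ hx0 hxle N
    linarith
  -- log bound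
  have hlog : ∀ x : ℝ, 0 ≤ x → x < 1 →
      (∑ i ∈ Finset.Icc 1 N, aCoeff p i * x ^ i) ≤ -Real.log (1 - x) := by
    intro x hx0 hx1
    have habs : |x| < 1 := by rwa [abs_of_nonneg hx0]
    have hsum := Real.hasSum_pow_div_log_of_abs_lt_one habs
    have h1 : (∑ i ∈ Finset.Icc 1 N, aCoeff p i * x ^ i)
        ≤ ∑ i ∈ Finset.Icc 1 N, x ^ i / i := by
      apply Finset.sum_le_sum
      intro i hi
      have hi1 : 1 ≤ i := (Finset.mem_Icc.mp hi).1
      calc aCoeff p i * x ^ i ≤ (1 / i) * x ^ i :=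
            mul_le_mul_of_nonneg_right (aCoeff_le hp0.le hi1) (by positivity)
        _ = x ^ i / i := by ring
    have h2 : (∑ i ∈ Finset.Icc 1 N, x ^ i / (i:ℝ))
        = ∑ i ∈ Finset.range N, x ^ (i + 1) / ((i:ℝ) + 1) := by
      rw [← Finset.Ico_add_one_right_eq_Icc, Finset.sum_Ico_eq_sum_range]
      apply Finset.sum_congr rfl
      intro i _
      push_cast
      ring_nf
    have h3 : (∑ i ∈ Finset.range N, x ^ (i + 1) / ((i:ℝ) + 1)) ≤ -Real.log (1 - x) := by
      exact sum_le_hasSum (Finset.range N) (fun i _ => by positivity) hsum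
    calc (∑ i ∈ Finset.Icc 1 N, aCoeff p i * x ^ i)
        ≤ ∑ i ∈ Finset.Icc 1 N, x ^ i / i := h1
      _ = ∑ i ∈ Finset.range N, x ^ (i + 1) / ((i:ℝ) + 1) := h2
      _ ≤ -Real.log (1 - x) := h3
  -- lower bound c * y^β ≤ G y for y ∈ (0,1]
  have hc0 : (0:ℝ) < (1 - p) * Real.exp (-(β * (μ + 1))) := by positivity
  have hlb : ∀ y : ℝ, 0 < y → y ≤ 1 →
      (1 - p) * Real.exp (-(β * (μ + 1))) * y ^ β ≤ cornerMap p μ N α ε₁ ε₂ y := by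
    intro y hy0 hy1
    rw [hkey]
    have hx0 : (0:ℝ) ≤ 1 - y := by linarith
    have hx1 : 1 - y < 1 := by linarith
    have hS := hlog (1 - y) hx0 hx1
    rw [sub_sub_cancel] at hS
    have hpowN : (1 - y) ^ N ≤ 1 := pow_le_one₀ hx0 (by linarith)
    have hexp : -(β * (μ + 1)) + Real.log y * β
        ≤ -(β * (μ + (∑ i ∈ Finset.Icc 1 N, aCoeff p i * (1 - y) ^ i)
            + (1 - y) ^ N)) := by nlinarith
    calc (1 - p) * Real.exp (-(β * (μ + 1))) * y ^ β
        = (1 - p) * Real.exp (-(β * (μ + 1)) + Real.log y * β) := by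
          rw [Real.rpow_def_of_pos hy0, Real.exp_add]
          ring
      _ ≤ ((1 - p) + p * Real.exp (-(α * (1 - ε₁)))) *
          Real.exp (-(β * (μ + (∑ i ∈ Finset.Icc 1 N, aCoeff p i * (1 - y) ^ i)
            + (1 - y) ^ N))) := by
          apply mul_le_mul _ (Real.exp_le_exp.mpr hexp) (Real.exp_pos _).le hC0.le
          nlinarith [Real.exp_pos (-(α * (1 - ε₁)))]
  -- the constant K
  set c : ℝ := (1 - p) * Real.exp (-(β * (μ + 1))) with hcdef
  set K : ℝ := c ^ (1 / (1 - β)) with hKdef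
  have hb1 : (0:ℝ) < 1 - β := by linarith
  have hK0 : 0 < K := Real.rpow_pos_of_pos hc0 _
  have hc1 : c ≤ 1 := by
    have h1 : Real.exp (-(β * (μ + 1))) ≤ 1 :=
      Real.exp_le_one_iff.mpr (neg_nonpos.mpr (mul_nonneg hβ0.le (by linarith)))
    rw [hcdef]
    calc (1 - p) * Real.exp (-(β * (μ + 1))) ≤ (1 - p) * 1 :=
          mul_le_mul_of_nonneg_left h1 hp1'.le
      _ ≤ 1 := by linarith
  have hK1 : K ≤ 1 := Real.rpow_le_one hc0.le hc1 (by positivity)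
  have hfix : c * K ^ β = K := by
    rw [hKdef, ← Real.rpow_mul hc0.le]
    nth_rewrite 1 [← Real.rpow_one c]
    rw [← Real.rpow_add hc0]
    congr 1
    field_simp
    ring
  -- iterates
  set y : ℕ → ℝ := fun n => (cornerMap p μ N α ε₁ ε₂)^[n] 1 with hydef
  have hy_succ : ∀ n, y (n + 1) = cornerMap p μ N α ε₁ ε₂ (y n) := by
    intro n
    simp only [hydef, Function.iterate_succ_apply']
  have hy_zero : y 0 = 1 := rfl
  have hmem : ∀ n, y n ∈ Set.Icc (0:ℝ) 1 := by
    intro n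
    induction n with
    | zero => rw [hy_zero]; exact ⟨zero_le_one, le_rfl⟩
    | succ n ih =>
      rw [hy_succ]
      exact ⟨(hGpos _).le, hGle1 _ ih⟩
  have hanti : Antitone y := by
    apply antitone_nat_of_succ_le
    intro n
    induction n with
    | zero =>
      rw [hy_succ, hy_zero]
      exact hGle1 1 ⟨by norm_num, le_rfl⟩
    | succ n ih =>
      rw [hy_succ (n+1)]
      calc cornerMap p μ N α ε₁ ε₂ (y (n+1)) ≤ cornerMap p μ N α ε₁ ε₂ (y n) :=
            hmono (hmem (n+1)) (hmem n) ih
        _ = y (n+1) := (hy_succ n).symm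
  have hyK : ∀ n, K ≤ y n := by
    intro n
    induction n with
    | zero => rw [hy_zero]; exact hK1
    | succ n ih =>
      rw [hy_succ]
      have hyn0 : 0 < y n := lt_of_lt_of_le hK0 ih
      calc K = c * K ^ β := hfix.symm
        _ ≤ c * (y n) ^ β :=
            mul_le_mul_of_nonneg_left (Real.rpow_le_rpow hK0.le ih hβ0.le) hc0.le
        _ ≤ cornerMap p μ N α ε₁ ε₂ (y n) := hlb (y n) hyn0 (hmem n).2
  have hbdd : BddBelow (Set.range y) := ⟨K, by rintro _ ⟨n, rfl⟩; exact hyK n⟩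
  have htend : Tendsto y atTop (nhds (⨅ n, y n)) := tendsto_atTop_ciInf hanti hbdd
  set L : ℝ := ⨅ n, y n with hLdef
  have hKL : K ≤ L := le_ciInf hyK
  have hfixL : cornerMap p μ N α ε₁ ε₂ L = L := by
    have h1 : Tendsto (fun n => y (n + 1)) atTop (nhds L) :=
      htend.comp (tendsto_add_atTop_nat 1)
    have h2 : Tendsto (fun n => cornerMap p μ N α ε₁ ε₂ (y n)) atTop
        (nhds (cornerMap p μ N α ε₁ ε₂ L)) := (hcont.tendsto L).comp htend
    have h3 : (fun n => cornerMap p μ N α ε₁ ε₂ (y n)) = fun n => y (n + 1) := by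
      funext n
      exact (hy_succ n).symm
    rw [h3] at h2
    exact tendsto_nhds_unique h2 h1
  refine ⟨hcont.continuousOn, hmono, hGpos 0, hGle1 1 ⟨by norm_num, le_rfl⟩, hanti,
    L, htend, hfixL, hKL, hK0⟩
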